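/- Let K/F be a separable quadratic field extension in characteristic 2 and b a symmetric bilinear form over F. Then the set of elements of F represented diagonally by b_K equals the set represented by b: D(b_K) ∩ F = D(b), where D(b) = {b(v,v) : 0 ≠ v}. -/

import Mathlib

open Polynomial

/-- For a separable quadratic extension `K/F` in characteristic 2,
`D(b_K) ∩ F = D(b)`. -/
theorem baseChange_values_inter {F K V : Type*} [Field F] [CharP F 2]
    [Field K] [Algebra F K] [FiniteDimensional F K]
    (hdim : Module.finrank F K = 2) [Algebra.IsSeparable F K]
    [AddCommGroup V] [Module F V] [FiniteDimensional F V]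
    (b : LinearMap.BilinForm F V) (hsymm : ∀ v w : V, b v w = b w v) :
    {α : F | ∃ w : TensorProduct F K V, w ≠ 0 ∧
        (LinearMap.BilinForm.baseChange K b) w w = algebraMap F K α} =
      {α : F | ∃ v : V, v ≠ 0 ∧ b v v = α} := by
  have hinj : Function.Injective (algebraMap F K) := (algebraMap F K).injective
  haveI hK2 : CharP K 2 := charP_of_injective_algebraMap hinj 2
  have h2K : (2 : K) = 0 := CharTwo.two_eq_zero
  -- find η ∉ F
  obtain ⟨η, hη⟩ : ∃ η : K, η ∉ (algebraMap F K).range := by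
    by_contra h
    push_neg at h
    have hbot : (⊥ : Subalgebra F K) = ⊤ := by
      ext x
      simp only [Algebra.mem_bot, Algebra.mem_top, iff_true]
      obtain ⟨y, hy⟩ := h x
      exact ⟨y, hy⟩
    have := Subalgebra.bot_eq_top_iff_finrank_eq_one.mp hbot
    rw [hdim] at this; norm_num at this
  have hη1 : η ∉ Submodule.span F ({1} : Set K) := by
    intro h
    rw [Submodule.mem_span_singleton] at h
    obtain ⟨a, ha⟩ := h
    exact hη ⟨a, by rw [Algebra.algebraMap_eq_smul_one, ha]⟩
  -- basis {1, η}
  have hli : LinearIndependent F ![(1 : K), η] := by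
    rw [LinearIndependent.pair_iff' one_ne_zero]
    intro a ha
    exact hη1 (ha ▸ Submodule.smul_mem _ a (Submodule.mem_span_singleton_self 1))
  let B : Module.Basis (Fin 2) F K := basisOfLinearIndependentOfCardEqFinrank hli (by simp [hdim])
  have hB0 : B 0 = 1 := by simp [B, coe_basisOfLinearIndependentOfCardEqFinrank]
  have hB1 : B 1 = η := by simp [B, coe_basisOfLinearIndependentOfCardEqFinrank]
  have hdecomp : ∀ k : K, ∃ a c : F, k = a • (1 : K) + c • η := by
    intro k
    refine ⟨B.repr k 0, B.repr k 1, ?_⟩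
    conv_lhs => rw [← B.sum_repr k]
    rw [Fin.sum_univ_two, hB0, hB1]
  -- η² = t + s η with s ≠ 0
  obtain ⟨t, s, hts⟩ := hdecomp (η ^ 2)
  have hint : IsIntegral F η := Algebra.IsIntegral.isIntegral η
  have hs : s ≠ 0 := by
    intro hs0
    rw [hs0, zero_smul, add_zero, ← Algebra.algebraMap_eq_smul_one] at hts
    have hq : Polynomial.aeval η (X ^ 2 - C t) = 0 := by
      simp [hts]
    have hdvd := minpoly.dvd F η hq
    have hdeg2 : (minpoly F η).natDegree = 2 := by
      have h1 := minpoly.natDegree_le (A:=F) η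
      rw [hdim] at h1
      have h2 := (minpoly.two_le_natDegree_iff hint).mpr hη
      omega
    have heq : minpoly F η = X ^ 2 - C t := by
      refine Polynomial.eq_of_dvd_of_natDegree_le_of_leadingCoeff hdvd ?_ ?_
      · rw [hdeg2]
        exact (Polynomial.natDegree_X_pow_sub_C (n := 2) (r := t)).le
      · rw [(minpoly.monic hint).leadingCoeff,
          (Polynomial.monic_X_pow_sub_C t (by norm_num : (2:ℕ) ≠ 0)).leadingCoeff]
    have hsep : (minpoly F η).Separable := Algebra.IsSeparable.isSeparable F η
    rw [heq] at hsep
    have hder : (X ^ 2 - C t : F[X]).derivative = 0 := by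
      have h2 : (2 : F) = 0 := CharTwo.two_eq_zero
      simp [Polynomial.derivative_sub, Polynomial.derivative_X_pow, one_add_one_eq_two, h2]
    rw [Polynomial.Separable, hder, isCoprime_zero_right] at hsep
    have := Polynomial.natDegree_eq_zero_of_isUnit hsep
    rw [Polynomial.natDegree_X_pow_sub_C] at this
    norm_num at this
  have hη2 : η * η = algebraMap F K t + algebraMap F K s * η := by
    rw [← sq, hts, Algebra.smul_def, Algebra.smul_def, mul_one]
  -- decomposition of tensors
  have hsurj : ∀ w : TensorProduct F K V, ∃ v₀ v₁ : V,
      w = (1 : K) ⊗ₜ[F] v₀ + η ⊗ₜ[F] v₁ := by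
    intro w
    induction w with
    | zero => exact ⟨0, 0, by simp⟩
    | tmul k v =>
        obtain ⟨a, c, hk⟩ := hdecomp k
        refine ⟨a • v, c • v, ?_⟩
        rw [hk, TensorProduct.add_tmul, TensorProduct.smul_tmul, TensorProduct.smul_tmul]
    | add x y hx hy =>
        obtain ⟨v₀, v₁, hx⟩ := hx
        obtain ⟨u₀, u₁, hy⟩ := hy
        exact ⟨v₀ + u₀, v₁ + u₁, by
          rw [hx, hy, TensorProduct.tmul_add, TensorProduct.tmul_add]; abel⟩
  ext α
  simp only [Set.mem_setOf_eq]
  constructor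
  · rintro ⟨w, hw0, hw⟩
    obtain ⟨v₀, v₁, rfl⟩ := hsurj w
    simp only [map_add, LinearMap.add_apply, LinearMap.BilinForm.baseChange_tmul] at hw
    rw [hsymm v₁ v₀] at hw
    simp only [Algebra.smul_def] at hw
    have key : algebraMap F K (b v₀ v₀ + b v₁ v₁ * t)
        + algebraMap F K (b v₁ v₁ * s) * η = algebraMap F K α := by
      rw [← hw, hη2, map_add, map_mul, map_mul]
      linear_combination (-(algebraMap F K (b v₀ v₁) * η)) * h2K
    have hv1 : b v₁ v₁ = 0 := by
      by_contra hne
      apply hη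
      have hstep : algebraMap F K (b v₁ v₁ * s) * η
          = algebraMap F K (α - (b v₀ v₀ + b v₁ v₁ * t)) := by
        rw [map_sub, ← key]; ring
      have hne' : algebraMap F K (b v₁ v₁ * s) ≠ 0 := by
        rw [map_ne_zero_iff _ hinj]
        exact mul_ne_zero hne hs
      exact ⟨(b v₁ v₁ * s)⁻¹ * (α - (b v₀ v₀ + b v₁ v₁ * t)),
        by rw [map_mul, ← hstep, map_inv₀, inv_mul_cancel_left₀ hne']⟩
    rw [hv1, zero_mul] at key
    simp only [map_zero, zero_mul, add_zero] at key
    have hα : b v₀ v₀ = α := hinj key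
    by_cases hv0 : v₀ = 0
    · refine ⟨v₁, ?_, ?_⟩
      · intro h
        exact hw0 (by rw [hv0, h]; simp)
      · simp [hv1, ← hα, hv0]
    · exact ⟨v₀, hv0, hα⟩
  · rintro ⟨v, hv0, hv⟩
    refine ⟨(1 : K) ⊗ₜ[F] v, ?_, ?_⟩
    · intro h
      have : (TensorProduct.lid F V) ((LinearMap.rTensor V (B.coord 0)) ((1 : K) ⊗ₜ[F] v)) = v := by
        rw [LinearMap.rTensor_tmul, ← hB0, TensorProduct.lid_tmul, Module.Basis.coord_apply,
          Module.Basis.repr_self]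
        simp
      rw [h] at this
      simp at this
      exact hv0 this.symm
    · rw [LinearMap.BilinForm.baseChange_tmul, hv, mul_one, Algebra.algebraMap_eq_smul_one]
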